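/- Let r ≤ T be real numbers, let a : [r,T] → ℝ be continuous, and let η : [r,T] → ℝ be continuous, non-decreasing, and satisfy η(r) = 0. If γ : [r,T] → ℝ is continuous and satisfies γ(t) = η(t) + ∫_r^t a(s) γ(s) ds for all t ∈ [r,T], then γ(t) ≥ 0 for all t ∈ [r,T]. -/
import Mathlib


open MeasureTheory intervalIntegral

theorem stmt_10 (r T : ℝ) (hrT : r ≤ T) (a η γ : ℝ → ℝ)
    (ha : ContinuousOn a (Set.Icc r T))
    (hη : ContinuousOn η (Set.Icc r T))
    (hηmono : MonotoneOn η (Set.Icc r T))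
    (hηr : η r = 0)
    (hγ : ContinuousOn γ (Set.Icc r T))
    (heq : ∀ t ∈ Set.Icc r T, γ t = η t + ∫ s in r..t, a s * γ s) :
    ∀ t ∈ Set.Icc r T, 0 ≤ γ t := by
  by_contra hcon
  push_neg at hcon
  obtain ⟨t₁, ht₁, hγt₁⟩ := hcon
  obtain ⟨M, hM⟩ := (isCompact_Icc : IsCompact (Set.Icc r T)).exists_bound_of_continuousOn ha
  have hM0 : 0 ≤ M := le_trans (norm_nonneg _) (hM r ⟨le_refl r, hrT⟩)
  have hγr : γ r = 0 := by
    have := heq r ⟨le_refl r, hrT⟩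
    simpa [hηr] using this
  -- the set where γ is nonnegative, up to t₁
  set S : Set ℝ := Set.Icc r t₁ ∩ γ ⁻¹' Set.Ici 0 with hSdef
  have hsub1 : Set.Icc r t₁ ⊆ Set.Icc r T := Set.Icc_subset_Icc le_rfl ht₁.2
  have hSclosed : IsClosed S :=
    (hγ.mono hsub1).preimage_isClosed_of_isClosed isClosed_Icc isClosed_Ici
  have hScpt : IsCompact S :=
    isCompact_Icc.of_isClosed_subset hSclosed Set.inter_subset_left
  have hrS : r ∈ S := ⟨⟨le_refl r, ht₁.1⟩, by simp [hγr]⟩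
  set t₀ : ℝ := sSup S with ht₀def
  have ht₀S : t₀ ∈ S := hScpt.sSup_mem ⟨r, hrS⟩
  have ht₀mem : t₀ ∈ Set.Icc r t₁ := ht₀S.1
  have hγt₀ : 0 ≤ γ t₀ := ht₀S.2
  have ht₀T : t₀ ∈ Set.Icc r T := hsub1 ht₀mem
  have ht₀lt : t₀ < t₁ := by
    rcases lt_or_eq_of_le ht₀mem.2 with h | h
    · exact h
    · exact absurd (h ▸ hγt₀) (not_le.mpr hγt₁)
  have hneg : ∀ t ∈ Set.Ioc t₀ t₁, γ t < 0 := by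
    intro t ht
    by_contra hge
    push_neg at hge
    have htS : t ∈ S := ⟨⟨le_trans ht₀mem.1 ht.1.le, ht.2⟩, hge⟩
    exact absurd (le_csSup hScpt.bddAbove htS) (not_le.mpr ht.1)
  -- γ t₀ ≤ 0 by continuity from the right
  have hγt₀le : γ t₀ ≤ 0 := by
    have hcw : ContinuousWithinAt γ (Set.Ioc t₀ t₁) t₀ :=
      (hγ t₀ ht₀T).mono (fun x hx => ⟨le_trans ht₀T.1 hx.1.le, le_trans hx.2 ht₁.2⟩)
    have hne : (nhdsWithin t₀ (Set.Ioc t₀ t₁)).NeBot := by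
      rw [← mem_closure_iff_nhdsWithin_neBot, closure_Ioc ht₀lt.ne]
      exact ⟨le_rfl, ht₀lt.le⟩
    exact le_of_tendsto hcw (Filter.eventually_of_mem self_mem_nhdsWithin
      fun x hx => (hneg x hx).le)
  have hγle : ∀ t ∈ Set.Icc t₀ t₁, γ t ≤ 0 := by
    intro t ht
    rcases eq_or_lt_of_le ht.1 with h | h
    · exact h ▸ hγt₀le
    · exact (hneg t ⟨h, ht.2⟩).le
  have hsub2 : Set.Icc t₀ t₁ ⊆ Set.Icc r T := Set.Icc_subset_Icc ht₀T.1 ht₁.2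
  -- integrability
  have haγ : ContinuousOn (fun s => a s * γ s) (Set.Icc r T) := ha.mul hγ
  have hint : ∀ u ∈ Set.Icc r T, ∀ v ∈ Set.Icc r T,
      IntervalIntegrable (fun s => a s * γ s) volume u v := fun u hu v hv =>
    (haγ.mono (Set.uIcc_subset_Icc hu hv)).intervalIntegrable
  have hγint : ∀ u ∈ Set.Icc r T, ∀ v ∈ Set.Icc r T,
      IntervalIntegrable (fun s => -γ s) volume u v := fun u hu v hv =>
    ((hγ.mono (Set.uIcc_subset_Icc hu hv)).neg).intervalIntegrable
  -- the key inequality: -γ t ≤ M * F t on [t₀, t₁] where F t = ∫_{t₀}^t -γ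
  set F : ℝ → ℝ := fun t => ∫ s in t₀..t, -γ s with hFdef
  have hFnonneg : ∀ t ∈ Set.Icc t₀ t₁, 0 ≤ F t := by
    intro t ht
    apply intervalIntegral.integral_nonneg ht.1
    intro u hu
    have : γ u ≤ 0 := hγle u ⟨hu.1, le_trans hu.2 ht.2⟩
    linarith
  have hkey : ∀ t ∈ Set.Icc t₀ t₁, -γ t ≤ M * F t := by
    intro t ht
    have htT : t ∈ Set.Icc r T := hsub2 ht
    have hsplit : (∫ s in r..t₀, a s * γ s) + (∫ s in t₀..t, a s * γ s)
        = ∫ s in r..t, a s * γ s :=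
      intervalIntegral.integral_add_adjacent_intervals
        (hint r ⟨le_refl r, hrT⟩ t₀ ht₀T) (hint t₀ ht₀T t htT)
    have h1 : γ t = γ t₀ + (η t - η t₀) + ∫ s in t₀..t, a s * γ s := by
      rw [heq t htT, heq t₀ ht₀T, ← hsplit]; ring
    have hη0 : 0 ≤ η t - η t₀ := sub_nonneg.mpr (hηmono ht₀T htT ht.1)
    have h2 : -γ t ≤ ∫ s in t₀..t, -(a s * γ s) := by
      rw [intervalIntegral.integral_neg]
      linarith
    have h3 : (∫ s in t₀..t, -(a s * γ s)) ≤ ∫ s in t₀..t, M * (-γ s) := by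
      apply intervalIntegral.integral_mono_on ht.1
        ((hint t₀ ht₀T t htT).neg)
        (((hγint t₀ ht₀T t htT)).const_mul M)
      intro u hu
      have huT : u ∈ Set.Icc t₀ t₁ := ⟨hu.1, le_trans hu.2 ht.2⟩
      have hγu : γ u ≤ 0 := hγle u huT
      have hau : a u ≤ M := le_trans (le_abs_self _) (hM u (hsub2 huT))
      show -(a u * γ u) ≤ M * -γ u
      nlinarith
    have h4 : (∫ s in t₀..t, M * (-γ s)) = M * F t := by
      rw [hFdef]
      exact intervalIntegral.integral_const_mul M _
    linarith
  -- Grönwall for F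
  have hφcont : ContinuousOn (fun s => -γ s) (Set.Icc r T) := hγ.neg
  have hFcont : ContinuousOn F (Set.Icc t₀ t₁) := by
    have : ContinuousOn F (Set.uIcc t₀ t₁) := by
      apply intervalIntegral.continuousOn_primitive_interval
      exact (hφcont.mono (Set.uIcc_subset_Icc ht₀T (hsub2 (Set.right_mem_Icc.mpr ht₀lt.le)))).integrableOn_compact
        (by rw [Set.uIcc_of_le ht₀lt.le]; exact isCompact_Icc)
    rwa [Set.uIcc_of_le ht₀lt.le] at this
  have hF' : ∀ x ∈ Set.Ico t₀ t₁, HasDerivWithinAt F (-γ x) (Set.Ici x) x := by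
    intro x hx
    have hxT : x ∈ Set.Icc r T := hsub2 ⟨hx.1, hx.2.le⟩
    have hxltT : x < T := lt_of_lt_of_le hx.2 ht₁.2
    have hmem : Set.Icc r T ∈ nhdsWithin x (Set.Ioi x) := by
      rw [mem_nhdsWithin]
      exact ⟨Set.Iio T, isOpen_Iio, hxltT,
        fun y hy => ⟨le_trans hxT.1 hy.2.le, hy.1.le⟩⟩
    have hmeas : StronglyMeasurableAtFilter (fun s => -γ s) (nhdsWithin x (Set.Ioi x)) volume :=
      ⟨Set.Icc r T, hmem, hφcont.aestronglyMeasurable measurableSet_Icc⟩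
    have hcw : ContinuousWithinAt (fun s => -γ s) (Set.Ioi x) x :=
      (hφcont x hxT).mono_of_mem_nhdsWithin hmem
    exact intervalIntegral.integral_hasDerivWithinAt_right
      (hγint t₀ ht₀T x hxT) hmeas hcw
  have hgron := norm_le_gronwallBound_of_norm_deriv_right_le (f := F)
    (f' := fun x => -γ x) (δ := 0) (K := M) (ε := 0) hFcont hF'
    (by simp [hFdef]) ?_ t₁ (Set.right_mem_Icc.mpr ht₀lt.le)
  · rw [gronwallBound_ε0_δ0] at hgron
    have hF1 : F t₁ = 0 := by
      have := hFnonneg t₁ (Set.right_mem_Icc.mpr ht₀lt.le)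
      have habs : |F t₁| ≤ 0 := by simpa [Real.norm_eq_abs] using hgron
      linarith [abs_nonneg (F t₁), le_abs_self (F t₁)]
    have := hkey t₁ (Set.right_mem_Icc.mpr ht₀lt.le)
    rw [hF1] at this
    linarith
  · intro x hx
    have hxI : x ∈ Set.Icc t₀ t₁ := ⟨hx.1, hx.2.le⟩
    have h1 : -γ x ≤ M * F x := hkey x hxI
    have h2 : 0 ≤ -γ x := neg_nonneg.mpr (hγle x hxI)
    have h3 : 0 ≤ F x := hFnonneg x hxI
    rw [Real.norm_eq_abs, Real.norm_eq_abs, abs_of_nonneg h2, abs_of_nonneg h3]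
    linarith
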